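/- Let H and K be complex Hilbert spaces and let T be a bounded operator on H ⊕ K of upper-triangular block form [[T₁, T₃],[0, T₂]] (i.e., T(h, k) = (T₁h + T₃k, T₂k)). If T can be written as a product of two positive contractions on H ⊕ K, then T₁ can be written as a product of two positive contractions on H and T₂ can be written as a product of two positive contractions on K. -/

import Mathlib

set_option maxHeartbeats 1600000

open ContinuousLinearMap

local notation "⟪" x ", " y "⟫" => @inner ℂ _ _ x y

/-- Key lemma: if `A, B` are positive contractions on a Hilbert space `E`, `J : F →L E` is an
isometric embedding (`J† ∘ J = 1`) whose range is invariant under `A ∘ B`, then the compression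
`J† ∘ (A ∘ B) ∘ J` is a product of two positive contractions on `F`. -/
theorem key_compression {E F : Type*} [NormedAddCommGroup E] [InnerProductSpace ℂ E]
    [CompleteSpace E] [NormedAddCommGroup F] [InnerProductSpace ℂ F] [CompleteSpace F]
    (A B : E →L[ℂ] E) (hA : A.IsPositive) (hAn : ‖A‖ ≤ 1) (hB : B.IsPositive) (hBn : ‖B‖ ≤ 1)
    (J : F →L[ℂ] E) (hJ : adjoint J ∘L J = 1)
    (hinv : ∀ x : F, ∃ y : F, (A ∘L B) (J x) = J y) :
    ∃ A₁ B₁ : F →L[ℂ] F, A₁.IsPositive ∧ ‖A₁‖ ≤ 1 ∧ B₁.IsPositive ∧ ‖B₁‖ ≤ 1 ∧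
      adjoint J ∘L (A ∘L B) ∘L J = A₁ ∘L B₁ := by
  classical
  -- square root of A
  have hA0 : (0 : E →L[ℂ] E) ≤ A := (nonneg_iff_isPositive A).mpr hA
  set R : E →L[ℂ] E := CFC.sqrt A with hRdef
  have hR0 : (0 : E →L[ℂ] E) ≤ R := CFC.sqrt_nonneg (a := A)
  have hRpos : R.IsPositive := (nonneg_iff_isPositive R).mp hR0
  have hRsa : IsSelfAdjoint R := hRpos.isSelfAdjoint
  have hRadj : adjoint R = R := hRsa.adjoint_eq
  have hRR : R ∘L R = A := by
    have := CFC.sq_sqrt A hA0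
    rw [sq] at this
    exact this
  have hRn : ‖R‖ ≤ 1 := by
    have h1 : ‖adjoint R ∘L R‖ = ‖R‖ * ‖R‖ := norm_adjoint_comp_self R
    rw [hRadj, hRR] at h1
    nlinarith [norm_nonneg R, hAn]
  clear_value R
  clear hRdef hR0 hA0
  -- the closed subspace generated by the range of `R ∘ B ∘ J`
  set K0 : Submodule ℂ E := LinearMap.range ((R ∘L B ∘L J) : F →ₗ[ℂ] E) with hK0def
  set M : Submodule ℂ E := K0.topologicalClosure with hMdef
  haveI : CompleteSpace M := (Submodule.isClosed_topologicalClosure _).completeSpace_coe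
  set PM : E →L[ℂ] E := M.subtypeL ∘L M.orthogonalProjectionOnto with hPMdef
  have hPMsa : IsSelfAdjoint PM := isSelfAdjoint_starProjection M
  have hPM_mem : ∀ x : E, x ∈ M → PM x = x := by
    intro x hx
    simp only [hPMdef, coe_comp', Function.comp_apply]
    simpa using Submodule.starProjection_eq_self_iff.mpr hx
  have hPM_orth : ∀ x : E, x ∈ Mᗮ → PM x = 0 := by
    intro x hx
    simp only [hPMdef, coe_comp', Function.comp_apply]
    rw [Submodule.orthogonalProjectionOnto_eq_zero_iff.mpr hx]
    simp
  have hPMn : ‖PM‖ ≤ 1 := by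
    refine opNorm_le_bound _ zero_le_one fun x => ?_
    rw [one_mul]
    have h1 : ‖M.orthogonalProjectionOnto x‖ ≤ ‖(M.orthogonalProjectionOnto : E →L[ℂ] M)‖ * ‖x‖ :=
      (M.orthogonalProjectionOnto).le_opNorm x
    have h2 := Submodule.orthogonalProjectionOnto_norm_le M
    have h3 : ‖PM x‖ = ‖M.orthogonalProjectionOnto x‖ := rfl
    nlinarith [norm_nonneg x]
  -- J is an isometry
  have hJiso : ∀ x : F, ‖J x‖ = ‖x‖ := (norm_map_iff_adjoint_comp_self J).mpr hJ
  have hJn : ‖J‖ ≤ 1 := opNorm_le_bound _ zero_le_one fun x => by rw [one_mul, hJiso]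
  have hJdn : ‖adjoint J‖ ≤ 1 := by rw [LinearIsometryEquiv.norm_map]; exact hJn
  have hJJ : ∀ x : F, adjoint J (J x) = x := fun x => by
    have := congrFun (congrArg (fun (f : F →L[ℂ] F) => (f : F → F)) hJ) x
    simpa using this
  have hJinner : ∀ (c d : F), ⟪J c, J d⟫ = ⟪c, d⟫ := by
    intro c d
    rw [← adjoint_inner_left, hJJ]
  -- the two factors
  refine ⟨adjoint J ∘L ((R ∘L (PM ∘L R)) ∘L J), adjoint J ∘L B ∘L J, ?_, ?_, ?_, ?_, ?_⟩
  · -- positivity of A₁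
    have hPMpos : PM.IsPositive := by
      have h := (isPositive_one (E := E)).conj_adjoint PM
      have heq : PM ∘L 1 ∘L adjoint PM = PM := by
        rw [hPMsa.adjoint_eq, one_def, id_comp]
        ext x
        simp only [coe_comp', Function.comp_apply]
        exact hPM_mem _ (by
          simp only [hPMdef, coe_comp', Function.comp_apply]
          exact Submodule.coe_mem _)
      rwa [heq] at h
    have hC : (R ∘L (PM ∘L R)).IsPositive := by
      have h := hPMpos.conj_adjoint R
      rwa [hRadj, comp_assoc] at h
    exact hC.adjoint_conj J
  · -- norm of A₁
    calc ‖adjoint J ∘L ((R ∘L (PM ∘L R)) ∘L J)‖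
        ≤ ‖adjoint J‖ * ‖(R ∘L (PM ∘L R)) ∘L J‖ := opNorm_comp_le _ _
      _ ≤ 1 := by
          have h2 : ‖(R ∘L (PM ∘L R)) ∘L J‖ ≤ ‖R ∘L (PM ∘L R)‖ * ‖J‖ := opNorm_comp_le _ _
          have h3 : ‖R ∘L (PM ∘L R)‖ ≤ ‖R‖ * ‖PM ∘L R‖ := opNorm_comp_le _ _
          have h4 : ‖PM ∘L R‖ ≤ ‖PM‖ * ‖R‖ := opNorm_comp_le _ _
          nlinarith [norm_nonneg (adjoint J), norm_nonneg J, norm_nonneg R, norm_nonneg PM,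
            norm_nonneg (R ∘L (PM ∘L R)), norm_nonneg (PM ∘L R),
            norm_nonneg ((R ∘L (PM ∘L R)) ∘L J)]
  · -- positivity of B₁
    exact hB.adjoint_conj J
  · -- norm of B₁
    calc ‖adjoint J ∘L B ∘L J‖ ≤ ‖adjoint J‖ * ‖B ∘L J‖ := opNorm_comp_le _ _
      _ ≤ 1 := by
          have h2 : ‖B ∘L J‖ ≤ ‖B‖ * ‖J‖ := opNorm_comp_le _ _
          nlinarith [norm_nonneg (adjoint J), norm_nonneg J, norm_nonneg B, norm_nonneg (B ∘L J)]
  · -- the factorization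
    ext x
    simp only [coe_comp', Function.comp_apply]
    set u : E := B (J x) with hu
    have hmem : R u ∈ M := Submodule.le_topologicalClosure _ ⟨x, rfl⟩
    -- the error vector is orthogonal to M
    have hAapp : ∀ z : E, R (R z) = A z := fun z =>
      congrFun (congrArg (fun (f : E →L[ℂ] E) => (f : E → E)) hRR) z
    have hgen : ∀ y : F, ⟪R (B (J y)), R (u - J (adjoint J u))⟫ = 0 := by
      intro y
      obtain ⟨c, hc⟩ := hinv y
      have h1 := adjoint_inner_left R (R (u - J (adjoint J u))) (B (J y))
      rw [hRadj, hAapp] at h1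
      have h2 := adjoint_inner_left A (u - J (adjoint J u)) (B (J y))
      rw [hA.isSelfAdjoint.adjoint_eq] at h2
      have h3 : A (B (J y)) = J c := hc
      rw [h1, ← h2, h3, inner_sub_right, hJinner, adjoint_inner_right, sub_self]
    have hKorth : R (u - J (adjoint J u)) ∈ K0ᗮ := by
      rw [Submodule.mem_orthogonal]
      rintro w ⟨y, rfl⟩
      exact hgen y
    have horth : R (u - J (adjoint J u)) ∈ Mᗮ := by
      rw [hMdef, ← Submodule.orthogonal_orthogonal_eq_closure]
      rw [Submodule.mem_orthogonal]
      intro w hw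
      rw [← inner_eq_zero_symm]
      exact (Submodule.mem_orthogonal _ _).mp hw _ hKorth
    have hPMu : PM (R (J (adjoint J u))) = R u := by
      have hsplit : R (J (adjoint J u)) = R u - R (u - J (adjoint J u)) := by
        rw [map_sub]; abel
      rw [hsplit, map_sub, hPM_mem _ hmem, hPM_orth _ horth, sub_zero]
    rw [hPMu, hAapp]



/-- If an upper-triangular block operator `[[T₁, T₃],[0, T₂]]` on `H ⊕ K`
is a product of two positive contractions, then so are `T₁` (on `H`) and `T₂` (on `K`). -/
theorem diagonal_blocks_product_of_two_positive_contractions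
    {H K : Type*} [NormedAddCommGroup H] [InnerProductSpace ℂ H] [CompleteSpace H]
    [NormedAddCommGroup K] [InnerProductSpace ℂ K] [CompleteSpace K]
    (T₁ : H →L[ℂ] H) (T₂ : K →L[ℂ] K) (T₃ : K →L[ℂ] H)
    (T : WithLp 2 (H × K) →L[ℂ] WithLp 2 (H × K))
    (hT : ∀ (h : H) (k : K), T ((WithLp.equiv 2 (H × K)).symm (h, k)) =
        (WithLp.equiv 2 (H × K)).symm (T₁ h + T₃ k, T₂ k))
    (hfact : ∃ A B : WithLp 2 (H × K) →L[ℂ] WithLp 2 (H × K),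
        A.IsPositive ∧ ‖A‖ ≤ 1 ∧ B.IsPositive ∧ ‖B‖ ≤ 1 ∧ T = A ∘L B) :
    (∃ A₁ B₁ : H →L[ℂ] H, A₁.IsPositive ∧ ‖A₁‖ ≤ 1 ∧ B₁.IsPositive ∧ ‖B₁‖ ≤ 1 ∧
        T₁ = A₁ ∘L B₁) ∧
    (∃ A₂ B₂ : K →L[ℂ] K, A₂.IsPositive ∧ ‖A₂‖ ≤ 1 ∧ B₂.IsPositive ∧ ‖B₂‖ ≤ 1 ∧
        T₂ = A₂ ∘L B₂) := by
  obtain ⟨A, B, hApos, hAn, hBpos, hBn, hTAB⟩ := hfact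
  set E := WithLp 2 (H × K) with hE
  set L : E ≃L[ℂ] H × K := WithLp.prodContinuousLinearEquiv 2 ℂ H K with hL
  set iH : H →L[ℂ] E := L.symm.toContinuousLinearMap ∘L ContinuousLinearMap.inl ℂ H K with hiH
  set iK : K →L[ℂ] E := L.symm.toContinuousLinearMap ∘L ContinuousLinearMap.inr ℂ H K with hiK
  have hiHapp : ∀ h : H, iH h = (WithLp.equiv 2 (H × K)).symm (h, 0) := fun h => rfl
  have hiKapp : ∀ k : K, iK k = (WithLp.equiv 2 (H × K)).symm (0, k) := fun k => rfl
  have hiHfst : ∀ h : H, (iH h).fst = h := fun h => rfl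
  have hiHsnd : ∀ h : H, (iH h).snd = 0 := fun h => rfl
  have hiKfst : ∀ k : K, (iK k).fst = 0 := fun k => rfl
  have hiKsnd : ∀ k : K, (iK k).snd = k := fun k => rfl
  have hJH : adjoint iH ∘L iH = 1 := by
    rw [← ContinuousLinearMap.inner_map_map_iff_adjoint_comp_self]
    intro x y
    rw [WithLp.prod_inner_apply]
    simp only [WithLp.ofLp_fst, WithLp.ofLp_snd]
    rw [hiHfst, hiHfst, hiHsnd, inner_zero_left]
    simp
  have hJK : adjoint iK ∘L iK = 1 := by
    rw [← ContinuousLinearMap.inner_map_map_iff_adjoint_comp_self]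
    intro x y
    rw [WithLp.prod_inner_apply]
    simp only [WithLp.ofLp_fst, WithLp.ofLp_snd]
    rw [hiKsnd, hiKsnd, hiKfst, inner_zero_left]
    simp
  have hJJH : ∀ h : H, adjoint iH (iH h) = h := fun h => by
    have := congrFun (congrArg (fun (f : H →L[ℂ] H) => (f : H → H)) hJH) h
    simpa using this
  have hJJK : ∀ k : K, adjoint iK (iK k) = k := fun k => by
    have := congrFun (congrArg (fun (f : K →L[ℂ] K) => (f : K → K)) hJK) k
    simpa using this
  -- action of T on iH
  have hTiH : ∀ h : H, T (iH h) = iH (T₁ h) := by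
    intro h
    rw [hiHapp, hT h 0, hiHapp]
    simp
  constructor
  · -- the T₁ part
    obtain ⟨A₁, B₁, h1, h2, h3, h4, h5⟩ :=
      key_compression A B hApos hAn hBpos hBn iH hJH (fun h => ⟨T₁ h, by
        rw [← hTAB]; exact hTiH h⟩)
    refine ⟨A₁, B₁, h1, h2, h3, h4, ?_⟩
    rw [← h5]
    ext h
    simp only [ContinuousLinearMap.coe_comp', Function.comp_apply]
    have hab : A (B (iH h)) = T (iH h) := by rw [hTAB]; rfl
    rw [hab, hTiH h, hJJH]
  · -- the T₂ part : use the adjoint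
    have hTadj : adjoint T = B ∘L A := by
      rw [hTAB, ContinuousLinearMap.adjoint_comp, hApos.isSelfAdjoint.adjoint_eq,
        hBpos.isSelfAdjoint.adjoint_eq]
    have hTadjiK : ∀ k : K, adjoint T (iK k) = iK (adjoint T₂ k) := by
      intro k
      apply ext_inner_left ℂ
      intro v
      rw [ContinuousLinearMap.adjoint_inner_right]
      have hv : (WithLp.equiv 2 (H × K)).symm (v.fst, v.snd) = v := rfl
      have hTv : T v = (WithLp.equiv 2 (H × K)).symm (T₁ v.fst + T₃ v.snd, T₂ v.snd) := by
        rw [← hv]; exact hT v.fst v.snd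
      rw [hTv]
      rw [WithLp.prod_inner_apply, WithLp.prod_inner_apply]
      simp only [WithLp.ofLp_fst, WithLp.ofLp_snd]
      rw [hiKfst, hiKsnd, hiKfst, hiKsnd]
      simp only [WithLp.equiv_symm_apply, WithLp.toLp_fst, WithLp.toLp_snd, inner_zero_right]
      rw [ContinuousLinearMap.adjoint_inner_right]
    obtain ⟨A₂, B₂, h1, h2, h3, h4, h5⟩ :=
      key_compression B A hBpos hBn hApos hAn iK hJK (fun k => ⟨adjoint T₂ k, by
        rw [← hTadj]; exact hTadjiK k⟩)
    refine ⟨B₂, A₂, h3, h4, h1, h2, ?_⟩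
    have h6 : adjoint iK ∘L (B ∘L A) ∘L iK = adjoint T₂ := by
      ext k
      simp only [ContinuousLinearMap.coe_comp', Function.comp_apply]
      have hba : B (A (iK k)) = adjoint T (iK k) := by rw [hTadj]; rfl
      rw [hba, hTadjiK, hJJK]
    rw [h6] at h5
    have h7 : T₂ = adjoint (A₂ ∘L B₂) := by
      rw [← h5, ContinuousLinearMap.adjoint_adjoint]
    rw [h7, ContinuousLinearMap.adjoint_comp, h1.isSelfAdjoint.adjoint_eq,
      h3.isSelfAdjoint.adjoint_eq]
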